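/- Let k be an algebraically closed field, Λ a finitely generated free abelian group, and Z a Λ-graded commutative affine domain over k with dim_k Z_λ ≤ 1 for all λ ∈ Λ. Then Z has only finitely many Λ-graded (homogeneous) prime ideals. -/

import Mathlib

/-- commutative torus case of the main theorem: let `k` be an
algebraically closed field, `Λ` a finitely generated free abelian group, and
`Z` an affine (finitely generated) commutative domain over `k`, graded by `Λ`
with `dim_k Z_λ ≤ 1` for all `λ` (multiplicity-free grading).  Then `Z` has
only finitely many homogeneous (graded) prime ideals. -/
theorem finite_homogeneous_primes_of_multiplicity_free
    {k Λ Z : Type*} [Field k] [IsAlgClosed k]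
    [AddCommGroup Λ] [DecidableEq Λ] [Module.Free ℤ Λ] [Module.Finite ℤ Λ]
    [CommRing Z] [IsDomain Z] [Algebra k Z] [Algebra.FiniteType k Z]
    (𝒜 : Λ → Submodule k Z) [GradedAlgebra 𝒜]
    (hrank : ∀ lam : Λ, Module.rank k (𝒜 lam) ≤ 1) :
    {I : Ideal Z | I.IsPrime ∧ Ideal.IsHomogeneous 𝒜 I}.Finite := by
  classical
  obtain ⟨S, hS⟩ := (inferInstance : Algebra.FiniteType k Z).out
  set T : Finset Z := S.biUnion (fun s =>
    (DirectSum.decompose 𝒜 s).support.image (fun i => (DirectSum.decompose 𝒜 s i : Z))) with hT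
  have hThom : ∀ t ∈ T, ∃ i, t ∈ 𝒜 i := by
    intro t ht
    simp only [hT, Finset.mem_biUnion, Finset.mem_image] at ht
    obtain ⟨s, -, i, -, rfl⟩ := ht
    exact ⟨i, SetLike.coe_mem _⟩
  have hTgen : Algebra.adjoin k (T : Set Z) = ⊤ := by
    rw [eq_top_iff, ← hS]
    apply Algebra.adjoin_le
    intro s hs
    rw [← DirectSum.sum_support_decompose 𝒜 s]
    apply Subalgebra.sum_mem
    intro i hi
    apply Algebra.subset_adjoin
    exact Finset.mem_coe.mpr (Finset.mem_biUnion.mpr ⟨s, hs, Finset.mem_image.mpr ⟨i, hi, rfl⟩⟩)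
  have hclos : ∀ m ∈ Submonoid.closure (T : Set Z), ∃ i, m ∈ 𝒜 i := by
    intro m hm
    induction hm using Submonoid.closure_induction with
    | mem t ht => exact hThom t ht
    | one => exact ⟨0, SetLike.one_mem_graded 𝒜⟩
    | mul a b _ _ ha hb =>
        obtain ⟨i, hi⟩ := ha
        obtain ⟨j, hj⟩ := hb
        exact ⟨i + j, SetLike.mul_mem_graded hi hj⟩
  have hproj : ∀ lam : Λ, ∀ y ∈ Submodule.span k ((Submonoid.closure (T : Set Z) : Set Z)),
      (DirectSum.decompose 𝒜 y lam : Z) ∈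
        Submodule.span k {m : Z | m ∈ Submonoid.closure (T : Set Z) ∧ m ∈ 𝒜 lam} := by
    intro lam y hy
    induction hy using Submodule.span_induction with
    | mem m hm =>
        obtain ⟨i, hi⟩ := hclos m hm
        by_cases h : i = lam
        · subst h
          rw [DirectSum.decompose_of_mem_same 𝒜 hi]
          exact Submodule.subset_span ⟨hm, hi⟩
        · rw [DirectSum.decompose_of_mem_ne 𝒜 hi h]
          exact zero_mem _
    | zero => simp
    | add a b _ _ ha hb =>
        rw [DirectSum.decompose_add]
        simpa using add_mem ha hb
    | smul c a _ ha =>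
        rw [DirectSum.decompose_smul]
        simpa [DirectSum.smul_apply] using Submodule.smul_mem _ c ha
  -- key: a homogeneous element of a homogeneous prime `I` lies in any ideal `J`
  -- containing `I ∩ T`.
  have key : ∀ I J : Ideal Z, I.IsPrime →
      (∀ t ∈ T, t ∈ I → t ∈ J) → ∀ lam : Λ, ∀ x : Z, x ∈ 𝒜 lam → x ∈ I → x ∈ J := by
    intro I J hIp hTIJ lam x hxlam hxI
    by_cases hx0 : x = 0
    · simp [hx0]
    have hxspan : x ∈ Submodule.span k ((Submonoid.closure (T : Set Z) : Set Z)) := by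
      have h1 : x ∈ Subalgebra.toSubmodule (Algebra.adjoin k (T : Set Z)) := by
        rw [hTgen, Algebra.top_toSubmodule]; exact Submodule.mem_top
      rwa [Algebra.adjoin_eq_span] at h1
    have hx' := hproj lam x hxspan
    rw [DirectSum.decompose_of_mem_same 𝒜 hxlam] at hx'
    have hMne : ∃ m, (m ∈ Submonoid.closure (T : Set Z) ∧ m ∈ 𝒜 lam) ∧ m ≠ 0 := by
      by_contra h
      push_neg at h
      have hsub : {m : Z | m ∈ Submonoid.closure (T : Set Z) ∧ m ∈ 𝒜 lam} ⊆ {0} := by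
        intro m hm; exact h m hm
      have := Submodule.span_le.mpr (hsub.trans (by simp [Set.singleton_subset_iff] :
        ({0} : Set Z) ⊆ (⊥ : Submodule k Z))) hx'
      exact hx0 (by simpa using this)
    obtain ⟨m, ⟨hmc, hmlam⟩, hm0⟩ := hMne
    obtain ⟨v₀, hv₀⟩ := rank_le_one_iff.mp (hrank lam)
    obtain ⟨r, hr⟩ := hv₀ ⟨x, hxlam⟩
    obtain ⟨s, hs⟩ := hv₀ ⟨m, hmlam⟩
    have hr' : r • (v₀ : Z) = x := congrArg Subtype.val hr
    have hs' : s • (v₀ : Z) = m := congrArg Subtype.val hs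
    have hs0 : s ≠ 0 := by
      rintro rfl
      exact hm0 (by simpa using hs'.symm)
    have hxm : x = (r / s) • m := by
      rw [← hs', ← hr', smul_smul, div_mul_cancel₀ r hs0]
    have hc0 : r / s ≠ 0 := by
      rintro h
      rw [h, zero_smul] at hxm
      exact hx0 hxm
    have hmI : m ∈ I := by
      have : (r / s)⁻¹ • x = m := by rw [hxm, smul_smul, inv_mul_cancel₀ hc0, one_smul]
      rw [← this, Algebra.smul_def]
      exact Ideal.mul_mem_left _ _ hxI
    have hdvd : ∀ m' ∈ Submonoid.closure (T : Set Z), m' ∈ I → ∃ t ∈ T, t ∈ I ∧ t ∣ m' := by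
      intro m' hm'
      induction hm' using Submonoid.closure_induction with
      | mem t ht => exact fun h => ⟨t, ht, h, dvd_refl t⟩
      | one => exact fun h => absurd ((Ideal.eq_top_iff_one I).mpr h) hIp.ne_top
      | mul a b _ _ ha hb =>
          intro h
          rcases hIp.mem_or_mem h with h' | h'
          · obtain ⟨t, ht, htI, htd⟩ := ha h'
            exact ⟨t, ht, htI, htd.mul_right b⟩
          · obtain ⟨t, ht, htI, htd⟩ := hb h'
            exact ⟨t, ht, htI, htd.mul_left a⟩
    obtain ⟨t, htT, htI, u, rfl⟩ := hdvd m hmc hmI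
    have hmJ : t * u ∈ J := Ideal.mul_mem_right _ _ (hTIJ t htT htI)
    rw [hxm, Algebra.smul_def]
    exact Ideal.mul_mem_left _ _ hmJ
  have hfin : {s : Set Z | s ⊆ (T : Set Z)}.Finite := T.finite_toSet.finite_subsets
  apply Set.Finite.of_finite_image
    (f := fun I : Ideal Z => (T : Set Z) ∩ (I : Set Z))
  · apply hfin.subset
    rintro s ⟨I, -, rfl⟩
    exact Set.inter_subset_left
  · rintro I ⟨hIp, hIh⟩ J ⟨hJp, hJh⟩ hIJ
    have hIJ' : (T : Set Z) ∩ (I : Set Z) = (T : Set Z) ∩ (J : Set Z) := hIJ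
    have hiff : ∀ t ∈ T, (t ∈ I ↔ t ∈ J) := by
      intro t ht
      constructor <;> intro h
      · have h2 : t ∈ (T : Set Z) ∩ (I : Set Z) := ⟨ht, h⟩
        rw [hIJ'] at h2; exact h2.2
      · have h2 : t ∈ (T : Set Z) ∩ (J : Set Z) := ⟨ht, h⟩
        rw [← hIJ'] at h2; exact h2.2
    apply le_antisymm
    · intro x hx
      rw [← DirectSum.sum_support_decompose 𝒜 x]
      exact Ideal.sum_mem _ fun i _ =>
        key I J hIp (fun t ht h => (hiff t ht).mp h) i _ (SetLike.coe_mem _) (hIh i hx)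
    · intro x hx
      rw [← DirectSum.sum_support_decompose 𝒜 x]
      exact Ideal.sum_mem _ fun i _ =>
        key J I hJp (fun t ht h => (hiff t ht).mpr h) i _ (SetLike.coe_mem _) (hJh i hx)
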